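/- Let p : ℕ → [0,∞) satisfy ∑_{s} s³ p_s < ∞, let λ := ∑_{s} s p_s, for each s let (t_{s,ℓ})_{ℓ=0}^{s} be nonnegative reals with ∑_{ℓ=0}^{s} t_{s,ℓ} = 1, and let π ∈ [0,1]. Define a(z) := ∑_{s=0}^∞ p_s ∑_{ℓ=0}^{s} t_{s,ℓ} ∑_{r=s−ℓ}^{s} r b_{s,r}(z) and g(z) := λ z (1 − π + π z) − a(1 − π + π z) for z ∈ [0,1]. Then g has a derivative at z = 1 within [0,1] equal to λ − π ∑_{s} s(s−1) p_s t_{s,0}; in particular this derivative is strictly negative if and only if the cascade condition π ∑_{s} s(s−1) p_s t_{s,0} > λ holds. -/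

import Mathlib

/-- Binomial probability `b_{s,r}(p) = (s choose r) p^r (1-p)^(s-r)`. -/
noncomputable def binomProb (s r : ℕ) (p : ℝ) : ℝ :=
  (s.choose r : ℝ) * p ^ r * (1 - p) ^ (s - r)

/-- `a(z) = ∑_s p_s ∑_{ℓ=0}^s t_{s,ℓ} ∑_{r=s-ℓ}^s r b_{s,r}(z)`. -/
noncomputable def aFun (p : ℕ → ℝ) (t : ℕ → ℕ → ℝ) (z : ℝ) : ℝ :=
  ∑' s : ℕ, p s * ∑ ℓ ∈ Finset.range (s + 1),
    t s ℓ * ∑ r ∈ Finset.Icc (s - ℓ) s, (r : ℝ) * binomProb s r z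

/-- `g(z) = λ z (1-π+πz) - a(1-π+πz)`. -/
noncomputable def gFun (p : ℕ → ℝ) (t : ℕ → ℕ → ℝ) (π z : ℝ) : ℝ :=
  (∑' s : ℕ, (s : ℝ) * p s) * z * (1 - π + π * z) - aFun p t (1 - π + π * z)

open Finset Set Filter Topology

lemma binomProb_nonneg {s r : ℕ} {x : ℝ} (h0 : 0 ≤ x) (h1 : x ≤ 1) : 0 ≤ binomProb s r x := by
  have h2 : (0:ℝ) ≤ 1 - x := by linarith
  unfold binomProb
  positivity

lemma binomProb_sum (s : ℕ) (x : ℝ) : ∑ r ∈ Finset.range (s+1), binomProb s r x = 1 := by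
  have h := add_pow x (1-x) s
  have hx : x + (1 - x) = (1:ℝ) := by ring
  rw [hx, one_pow] at h
  rw [h]
  refine Finset.sum_congr rfl fun r _ => ?_
  unfold binomProb; ring

lemma binomProb_le_one {s r : ℕ} {x : ℝ} (h0 : 0 ≤ x) (h1 : x ≤ 1) : binomProb s r x ≤ 1 := by
  rcases le_or_gt r s with h | h
  · calc binomProb s r x ≤ ∑ i ∈ Finset.range (s+1), binomProb s i x :=
        Finset.single_le_sum (f := fun i => binomProb s i x) (fun i _ => binomProb_nonneg h0 h1)
          (Finset.mem_range.mpr (Nat.lt_succ_of_le h))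
    _ = 1 := binomProb_sum s x
  · simp [binomProb, Nat.choose_eq_zero_of_lt h]

noncomputable def bD (s r : ℕ) (x : ℝ) : ℝ :=
  (s.choose r : ℝ) * ((r:ℝ) * x ^ (r-1) * (1-x) ^ (s-r) - ((s-r : ℕ):ℝ) * x ^ r * (1-x) ^ (s-r-1))

lemma hasDerivAt_binomProb (s r : ℕ) (x : ℝ) :
    HasDerivAt (fun y => binomProb s r y) (bD s r x) x := by
  have h1 : HasDerivAt (fun y : ℝ => y ^ r) ((r:ℝ) * x ^ (r-1)) x := hasDerivAt_pow r x
  have hi : HasDerivAt (fun y : ℝ => 1 - y) (0 - 1) x := (hasDerivAt_const x (1:ℝ)).sub (hasDerivAt_id x)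
  have h2 : HasDerivAt (fun y : ℝ => (1 - y) ^ (s-r))
      ((((s-r:ℕ):ℝ) * (1-x) ^ (s-r-1)) * (0 - 1)) x :=
    (hasDerivAt_pow (s-r) (1-x)).comp x hi
  have h3 := (h1.mul h2).const_mul (s.choose r : ℝ)
  refine (h3.congr_of_eventuallyEq (Filter.Eventually.of_forall fun y => ?_)).congr_deriv ?_
  · simp only [binomProb, Pi.mul_apply]; ring
  · unfold bD; ring

lemma termA_le {s r : ℕ} (hr : r ≤ s) {x : ℝ} (h0 : 0 ≤ x) (h1 : x ≤ 1) :
    (r:ℝ) * (s.choose r : ℝ) * x ^ (r-1) * (1-x) ^ (s-r) ≤ s := by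
  rcases r with _ | r'
  · simpa using Nat.cast_nonneg s
  · rcases s with _ | s'
    · omega
    · have hrs : r' ≤ s' := by omega
      have hnatA : (r'+1) * ((s'+1).choose (r'+1)) = (s'+1) * (s'.choose r') := by
        rw [mul_comm]; exact (Nat.add_one_mul_choose_eq s' r').symm
      have hc : ((r'+1 : ℕ):ℝ) * (((s'+1).choose (r'+1) : ℕ):ℝ) = ((s'+1 : ℕ):ℝ) * ((s'.choose r' : ℕ):ℝ) := by
        exact_mod_cast congrArg (Nat.cast : ℕ → ℝ) hnatA
      have key : ((r'+1:ℕ):ℝ) * ((s'+1).choose (r'+1) : ℝ) * x ^ ((r'+1)-1) * (1-x) ^ ((s'+1)-(r'+1))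
          = ((s'+1:ℕ):ℝ) * binomProb s' r' x := by
        unfold binomProb
        rw [show (r'+1)-1 = r' from rfl, show (s'+1)-(r'+1) = s'-r' by omega]
        rw [hc]; ring
      push_cast at key ⊢
      rw [key]
      have := binomProb_le_one (s := s') (r := r') h0 h1
      nlinarith [Nat.cast_nonneg (α := ℝ) s']

lemma termB_le {s r : ℕ} (hr : r ≤ s) {x : ℝ} (h0 : 0 ≤ x) (h1 : x ≤ 1) :
    ((s-r:ℕ):ℝ) * (s.choose r : ℝ) * x ^ r * (1-x) ^ (s-r-1) ≤ s := by
  obtain ⟨d, hd⟩ : ∃ d, s - r = d := ⟨s - r, rfl⟩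
  rcases d with _ | d'
  · rw [hd]; simpa using Nat.cast_nonneg s
  · have hs : s = r + d' + 1 := by omega
    subst hs
    have hch : ((r + d' + 1).choose r : ℕ) = ((r+d'+1).choose (d'+1) : ℕ) :=
      Nat.choose_symm_of_eq_add (by omega)
    have hnat : (d'+1) * ((r+d'+1).choose r) = (r+d'+1) * ((r+d').choose d') := by
      rw [hch, mul_comm]
      exact (Nat.add_one_mul_choose_eq (r+d') d').symm
    have key : (((r+d'+1) - r:ℕ):ℝ) * (((r+d'+1).choose r : ℕ):ℝ) * x ^ r * (1-x) ^ ((r+d'+1)-r-1)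
        = ((r+d'+1:ℕ):ℝ) * binomProb (r+d') d' (1-x) := by
      rw [show (r+d'+1)-r = d'+1 by omega, show (d'+1)-1 = d' from rfl]
      unfold binomProb
      rw [show (1:ℝ)-(1-x) = x by ring, show (r+d')-d' = r by omega]
      calc ((d'+1:ℕ):ℝ) * (((r+d'+1).choose r : ℕ):ℝ) * x ^ r * (1-x) ^ d'
          = (((d'+1) * ((r+d'+1).choose r) : ℕ):ℝ) * (x ^ r * (1-x) ^ d') := by push_cast; ring
        _ = (((r+d'+1) * ((r+d').choose d') : ℕ):ℝ) * (x ^ r * (1-x) ^ d') := by rw [hnat]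
        _ = ((r+d'+1:ℕ):ℝ) * ((((r+d').choose d' : ℕ):ℝ) * (1-x) ^ d' * x ^ r) := by push_cast; ring
    rw [key]
    have hle := binomProb_le_one (s := r+d') (r := d') (by linarith : (0:ℝ) ≤ 1 - x) (by linarith)
    have hnn := binomProb_nonneg (s := r+d') (r := d') (by linarith : (0:ℝ) ≤ 1 - x) (by linarith)
    push_cast
    nlinarith [Nat.cast_nonneg (α := ℝ) (r+d'+1)]

lemma abs_bD_le {s r : ℕ} (hr : r ≤ s) {x : ℝ} (h0 : 0 ≤ x) (h1 : x ≤ 1) :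
    |bD s r x| ≤ 2 * s := by
  have h2 : (0:ℝ) ≤ 1 - x := by linarith
  have hA : (0:ℝ) ≤ (r:ℝ) * (s.choose r : ℝ) * x ^ (r-1) * (1-x) ^ (s-r) := by positivity
  have hB : (0:ℝ) ≤ ((s-r:ℕ):ℝ) * (s.choose r : ℝ) * x ^ r * (1-x) ^ (s-r-1) := by positivity
  have hAle := termA_le hr h0 h1
  have hBle := termB_le hr h0 h1
  have hbd : bD s r x = (r:ℝ) * (s.choose r : ℝ) * x ^ (r-1) * (1-x) ^ (s-r)
      - ((s-r:ℕ):ℝ) * (s.choose r : ℝ) * x ^ r * (1-x) ^ (s-r-1) := by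
    unfold bD; ring
  rw [hbd, abs_sub_le_iff]
  constructor <;> linarith

lemma binomProb_one (s r : ℕ) (hr : r ≤ s) : binomProb s r 1 = if r = s then 1 else 0 := by
  obtain ⟨d, rfl⟩ := Nat.exists_eq_add_of_le hr
  rcases d with _ | d'
  · simp [binomProb]
  · simp [binomProb, show ¬ (r = r + (d'+1)) by omega, show r + (d'+1) - r = d'+1 by omega]

lemma bD_one (s r : ℕ) (hr : r ≤ s) :
    bD s r 1 = if r = s then (s:ℝ) else if r + 1 = s then -(s:ℝ) else 0 := by
  obtain ⟨d, rfl⟩ := Nat.exists_eq_add_of_le hr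
  rcases d with _ | _ | d'
  · simp [bD]
  · have h1 : r + 1 - r = 1 := by omega
    have h2 : (r+1).choose r = r + 1 := Nat.choose_succ_self_right r
    simp [bD, h1, h2, show ¬ (r = r + 1) by omega]
  · have h1 : r + (d'+2) - r = d'+2 := by omega
    simp [bD, h1, show ¬(r = r + (d'+2)) by omega, show ¬(r+1 = r + (d'+2)) by omega,
      show d'+2-1 = d'+1 by omega]

lemma inner_bD_one (s ℓ : ℕ) :
    ∑ r ∈ Finset.Icc (s-ℓ) s, (r:ℝ) * bD s r 1 = if ℓ = 0 then (s:ℝ)^2 else (s:ℝ) := by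
  rcases ℓ with _ | ℓ'
  · rw [if_pos rfl]
    simp only [Nat.sub_zero, Finset.Icc_self, Finset.sum_singleton]
    rw [bD_one s s le_rfl, if_pos rfl]; ring
  · rw [if_neg (by omega)]
    rcases s with _ | s'
    · simp
    · set s := s' + 1
      have hsub : ({s-1, s} : Finset ℕ) ⊆ Finset.Icc (s-(ℓ'+1)) s := by
        intro x hx
        simp only [Finset.mem_insert, Finset.mem_singleton] at hx
        rcases hx with rfl | rfl <;> simp [Finset.mem_Icc] <;> omega
      rw [← Finset.sum_subset hsub (fun x hx hnx => ?_)]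
      · rw [Finset.sum_insert (by simp; omega), Finset.sum_singleton]
        rw [bD_one s (s-1) (by omega), bD_one s s le_rfl]
        rw [if_neg (by omega), if_pos (by omega), if_pos rfl]
        rw [Nat.cast_sub (by omega)]
        push_cast
        ring
      · simp only [Finset.mem_Icc] at hx
        simp only [Finset.mem_insert, Finset.mem_singleton, not_or] at hnx
        rw [bD_one s x (by omega), if_neg (by omega), if_neg (by omega), mul_zero]

lemma inner_binomProb_one (s ℓ : ℕ) :
    ∑ r ∈ Finset.Icc (s-ℓ) s, (r:ℝ) * binomProb s r 1 = (s:ℝ) := by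
  rw [Finset.sum_eq_single s (fun b hb hbs => ?_) (fun hns => ?_)]
  · rw [binomProb_one s s le_rfl, if_pos rfl, mul_one]
  · simp only [Finset.mem_Icc] at hb
    rw [binomProb_one s b hb.2, if_neg hbs, mul_zero]
  · exact absurd (Finset.mem_Icc.mpr ⟨Nat.sub_le s ℓ, le_rfl⟩) hns

lemma hasDerivWithinAt_tsum_aux {f f' : ℕ → ℝ → ℝ} {u : ℕ → ℝ} {s : Set ℝ}
    (hs : Convex ℝ s) (hu : Summable u)
    (hf : ∀ n, ∀ x ∈ s, HasDerivWithinAt (f n) (f' n x) s x)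
    (hb : ∀ n, ∀ x ∈ s, ‖f' n x‖ ≤ u n)
    {x₀ : ℝ} (hx₀ : x₀ ∈ s) (hf0 : Summable fun n => f n x₀) :
    HasDerivWithinAt (fun x => ∑' n, f n x) (∑' n, f' n x₀) s x₀ := by
  have hdiff : ∀ n, ∀ x ∈ s, ‖f n x - f n x₀‖ ≤ u n * ‖x - x₀‖ := fun n x hx =>
    hs.norm_image_sub_le_of_norm_hasDerivWithin_le (hf n) (hb n) hx₀ hx
  have hsum : ∀ x ∈ s, Summable fun n => f n x := by
    intro x hx
    have h1 : Summable fun n => f n x - f n x₀ :=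
      Summable.of_norm_bounded (hu.mul_right ‖x - x₀‖) (fun n => hdiff n x hx)
    simpa using h1.add hf0
  rw [hasDerivWithinAt_iff_tendsto_slope]
  have hslope : ∀ᶠ x in 𝓝[s \ {x₀}] x₀,
      slope (fun y => ∑' n, f n y) x₀ x = ∑' n, slope (f n) x₀ x := by
    filter_upwards [self_mem_nhdsWithin] with x hx
    have hxs : x ∈ s := hx.1
    calc slope (fun y => ∑' n, f n y) x₀ x = ((∑' n, f n x) - ∑' n, f n x₀) / (x - x₀) :=
          slope_def_field _ _ _
      _ = (∑' n, (f n x - f n x₀)) / (x - x₀) := by rw [Summable.tsum_sub (hsum x hxs) hf0]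
      _ = ∑' n, (f n x - f n x₀) / (x - x₀) := by rw [tsum_div_const]
      _ = ∑' n, slope (f n) x₀ x := by
          refine tsum_congr fun n => ?_
          rw [slope_def_field]
  refine Tendsto.congr' (EventuallyEq.symm hslope) ?_
  refine tendsto_tsum_of_dominated_convergence hu (fun n => ?_) ?_
  · exact hasDerivWithinAt_iff_tendsto_slope.mp (hf n x₀ hx₀)
  · filter_upwards [self_mem_nhdsWithin] with x hx n
    have hxs : x ∈ s := hx.1
    have hne : x ≠ x₀ := hx.2
    rw [slope_def_field, norm_div]
    rw [div_le_iff₀ (by simpa [sub_eq_zero] using hne : (0:ℝ) < ‖x - x₀‖)]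
    exact hdiff n x hxs

/-- Summand of `aFun`. -/
noncomputable def Ffun (p : ℕ → ℝ) (t : ℕ → ℕ → ℝ) (s : ℕ) (z : ℝ) : ℝ :=
  p s * ∑ ℓ ∈ Finset.range (s + 1), t s ℓ * ∑ r ∈ Finset.Icc (s - ℓ) s, (r : ℝ) * binomProb s r z

/-- Derivative of summand of `aFun`. -/
noncomputable def Fder (p : ℕ → ℝ) (t : ℕ → ℕ → ℝ) (s : ℕ) (z : ℝ) : ℝ :=
  p s * ∑ ℓ ∈ Finset.range (s + 1), t s ℓ * ∑ r ∈ Finset.Icc (s - ℓ) s, (r : ℝ) * bD s r z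

lemma hasDerivAt_Ffun (p : ℕ → ℝ) (t : ℕ → ℕ → ℝ) (s : ℕ) (z : ℝ) :
    HasDerivAt (fun y => Ffun p t s y) (Fder p t s z) z := by
  unfold Ffun Fder
  exact (HasDerivAt.fun_sum fun ℓ _ => ((HasDerivAt.fun_sum fun r _ =>
    ((hasDerivAt_binomProb s r z).const_mul (r:ℝ))).const_mul (t s ℓ))).const_mul (p s)

theorem stmt4 (p : ℕ → ℝ) (hp : ∀ s, 0 ≤ p s)
    (hp3 : Summable fun s : ℕ => (s : ℝ) ^ 3 * p s)
    (t : ℕ → ℕ → ℝ) (ht : ∀ s ℓ, 0 ≤ t s ℓ)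
    (ht1 : ∀ s, ∑ ℓ ∈ Finset.range (s + 1), t s ℓ = 1)
    (π : ℝ) (hπ : π ∈ Set.Icc (0:ℝ) 1) :
    HasDerivWithinAt (fun z => gFun p t π z)
      ((∑' s : ℕ, (s : ℝ) * p s) - π * ∑' s : ℕ, (s : ℝ) * ((s : ℝ) - 1) * p s * t s 0)
      (Set.Icc 0 1) 1 ∧
    ((∑' s : ℕ, (s : ℝ) * p s) - π * (∑' s : ℕ, (s : ℝ) * ((s : ℝ) - 1) * p s * t s 0) < 0 ↔
      (∑' s : ℕ, (s : ℝ) * p s) < π * ∑' s : ℕ, (s : ℝ) * ((s : ℝ) - 1) * p s * t s 0) := by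
  obtain ⟨hπ0, hπ1⟩ := hπ
  refine ⟨?_, by constructor <;> intro h <;> linarith⟩
  have ht0le : ∀ s, t s 0 ≤ 1 := fun s => by
    rw [← ht1 s]
    exact Finset.single_le_sum (f := fun ℓ => t s ℓ) (fun i _ => ht s i)
      (Finset.mem_range.mpr (by omega))
  -- summability facts
  have hS1 : Summable fun s : ℕ => (s:ℝ) * p s := by
    refine Summable.of_nonneg_of_le (fun s => mul_nonneg (Nat.cast_nonneg s) (hp s))
      (fun s => ?_) hp3
    rcases Nat.eq_zero_or_pos s with h | h
    · simp [h]
    · have h1 : (1:ℝ) ≤ s := by exact_mod_cast h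
      have h2 : (s:ℝ) ^ 1 ≤ (s:ℝ) ^ 3 := pow_le_pow_right₀ h1 (by norm_num)
      rw [pow_one] at h2
      exact mul_le_mul_of_nonneg_right h2 (hp s)
  have hS2 : Summable fun s : ℕ => (s:ℝ)^2 * p s := by
    refine Summable.of_nonneg_of_le (fun s => mul_nonneg (by positivity) (hp s))
      (fun s => ?_) hp3
    rcases Nat.eq_zero_or_pos s with h | h
    · simp [h]
    · have h1 : (1:ℝ) ≤ s := by exact_mod_cast h
      have h2 : (s:ℝ) ^ 2 ≤ (s:ℝ) ^ 3 := pow_le_pow_right₀ h1 (by norm_num)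
      exact mul_le_mul_of_nonneg_right h2 (hp s)
  have hSM : Summable fun s : ℕ => (s:ℝ) * ((s:ℝ)-1) * p s * t s 0 := by
    refine Summable.of_nonneg_of_le (fun s => ?_) (fun s => ?_) hp3
    · rcases Nat.eq_zero_or_pos s with h | h
      · simp [h]
      · have h1 : (1:ℝ) ≤ s := by exact_mod_cast h
        have h2 : (0:ℝ) ≤ (s:ℝ) - 1 := by linarith
        exact mul_nonneg (mul_nonneg (mul_nonneg (by positivity) h2) (hp s)) (ht s 0)
    · rcases Nat.eq_zero_or_pos s with h | h
      · simp [h]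
      · have h1 : (1:ℝ) ≤ s := by exact_mod_cast h
        have hq : (0:ℝ) ≤ (s:ℝ)^2 - s + 1 := by nlinarith
        have hh1 : (0:ℝ) ≤ (s:ℝ) * ((s:ℝ)-1) * p s * (1 - t s 0) :=
          mul_nonneg (mul_nonneg (mul_nonneg (by positivity) (by linarith)) (hp s))
            (by linarith [ht0le s])
        have hh2 : (0:ℝ) ≤ (s:ℝ) * p s * ((s:ℝ)^2 - s + 1) :=
          mul_nonneg (mul_nonneg (by positivity) (hp s)) hq
        nlinarith
  -- evaluation at 1
  have hF1 : ∀ s, Ffun p t s 1 = (s:ℝ) * p s := by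
    intro s
    unfold Ffun
    rw [Finset.sum_congr rfl (fun ℓ _ => by rw [inner_binomProb_one s ℓ]),
      ← Finset.sum_mul, ht1 s]
    ring
  have hF'1 : ∀ s, Fder p t s 1 = (s:ℝ) * p s + (s:ℝ)*((s:ℝ)-1)*p s*t s 0 := by
    intro s
    unfold Fder
    rw [Finset.sum_congr rfl (fun ℓ _ => by rw [inner_bD_one s ℓ])]
    have hsplit : ∀ ℓ ∈ Finset.range (s+1), t s ℓ * (if ℓ = 0 then (s:ℝ)^2 else (s:ℝ))
        = t s ℓ * (s:ℝ) + (if ℓ = 0 then t s 0 * ((s:ℝ)^2 - s) else 0) := by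
      intro ℓ _
      rcases eq_or_ne ℓ 0 with rfl | h
      · simp; ring
      · simp [h]
    rw [Finset.sum_congr rfl hsplit, Finset.sum_add_distrib, ← Finset.sum_mul, ht1 s,
      Finset.sum_ite_eq' (Finset.range (s+1)) 0 (fun _ => t s 0 * ((s:ℝ)^2 - s)),
      if_pos (Finset.mem_range.mpr (by omega))]
    ring
  -- uniform bound on derivatives
  have hbound : ∀ s : ℕ, ∀ x ∈ Set.Icc (0:ℝ) 1,
      ‖Fder p t s x‖ ≤ (2*(s:ℝ)^3 + 2*(s:ℝ)^2) * p s := by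
    intro s x hx
    obtain ⟨hx0, hx1⟩ := hx
    have hinner : ∀ ℓ, |∑ r ∈ Finset.Icc (s-ℓ) s, (r:ℝ) * bD s r x| ≤ 2*(s:ℝ)^2*((s:ℝ)+1) := by
      intro ℓ
      calc |∑ r ∈ Finset.Icc (s-ℓ) s, (r:ℝ) * bD s r x|
          ≤ ∑ r ∈ Finset.Icc (s-ℓ) s, |(r:ℝ) * bD s r x| := Finset.abs_sum_le_sum_abs _ _
        _ ≤ ∑ r ∈ Finset.Icc (s-ℓ) s, (s:ℝ) * (2*(s:ℝ)) := by
            refine Finset.sum_le_sum fun r hr => ?_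
            rw [Finset.mem_Icc] at hr
            rw [abs_mul, Nat.abs_cast]
            have h1 : (r:ℝ) ≤ s := by exact_mod_cast hr.2
            have h2 := abs_bD_le hr.2 hx0 hx1
            have h3 : (0:ℝ) ≤ |bD s r x| := abs_nonneg _
            nlinarith [Nat.cast_nonneg (α := ℝ) r]
        _ ≤ ((s:ℝ)+1) * ((s:ℝ) * (2*(s:ℝ))) := by
            rw [Finset.sum_const, nsmul_eq_mul]
            have hc : (Finset.Icc (s-ℓ) s).card ≤ s + 1 := by
              rw [Nat.card_Icc]; omega
            have hc' : ((Finset.Icc (s-ℓ) s).card : ℝ) ≤ (s:ℝ) + 1 := by exact_mod_cast hc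
            have hnn : (0:ℝ) ≤ (s:ℝ) * (2*(s:ℝ)) := by positivity
            nlinarith
        _ = 2*(s:ℝ)^2*((s:ℝ)+1) := by ring
    have h0 : ‖Fder p t s x‖
        = p s * |∑ ℓ ∈ Finset.range (s+1), t s ℓ * ∑ r ∈ Finset.Icc (s-ℓ) s, (r:ℝ) * bD s r x| := by
      rw [Real.norm_eq_abs]; unfold Fder; rw [abs_mul, abs_of_nonneg (hp s)]
    rw [h0]
    calc p s * |∑ ℓ ∈ Finset.range (s+1), t s ℓ * ∑ r ∈ Finset.Icc (s-ℓ) s, (r:ℝ) * bD s r x|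
        ≤ p s * ∑ ℓ ∈ Finset.range (s+1), |t s ℓ * ∑ r ∈ Finset.Icc (s-ℓ) s, (r:ℝ) * bD s r x| :=
          mul_le_mul_of_nonneg_left (Finset.abs_sum_le_sum_abs _ _) (hp s)
      _ ≤ p s * ∑ ℓ ∈ Finset.range (s+1), t s ℓ * (2*(s:ℝ)^2*((s:ℝ)+1)) := by
          refine mul_le_mul_of_nonneg_left (Finset.sum_le_sum fun ℓ _ => ?_) (hp s)
          rw [abs_mul, abs_of_nonneg (ht s ℓ)]
          exact mul_le_mul_of_nonneg_left (hinner ℓ) (ht s ℓ)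
      _ = p s * (2*(s:ℝ)^2*((s:ℝ)+1)) := by rw [← Finset.sum_mul, ht1 s, one_mul]
      _ = (2*(s:ℝ)^3 + 2*(s:ℝ)^2) * p s := by ring
  have hu : Summable (fun s : ℕ => (2*(s:ℝ)^3 + 2*(s:ℝ)^2) * p s) := by
    refine ((hp3.mul_left 2).add (hS2.mul_left 2)).congr fun s => ?_
    ring
  have hsum1 : Summable fun s => Ffun p t s 1 := hS1.congr fun s => (hF1 s).symm
  have hA : HasDerivWithinAt (fun z => aFun p t z) (∑' s, Fder p t s 1) (Set.Icc 0 1) 1 := by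
    have h := hasDerivWithinAt_tsum_aux (convex_Icc (0:ℝ) 1) hu
      (fun n x _ => (hasDerivAt_Ffun p t n x).hasDerivWithinAt) hbound
      (Set.mem_Icc.mpr ⟨by norm_num, le_rfl⟩) hsum1
    exact h
  have hAval : ∑' s, Fder p t s 1
      = (∑' s : ℕ, (s:ℝ) * p s) + ∑' s : ℕ, (s:ℝ)*((s:ℝ)-1)*p s*t s 0 := by
    rw [tsum_congr hF'1]
    exact Summable.tsum_add hS1 hSM
  have hw : HasDerivWithinAt (fun z : ℝ => 1 - π + π * z) π (Set.Icc (0:ℝ) 1) 1 := by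
    have h := (((hasDerivAt_id (1:ℝ)).const_mul π).const_add (1 - π)).hasDerivWithinAt
      (s := Set.Icc (0:ℝ) 1)
    simpa using h
  have hmaps : Set.MapsTo (fun z : ℝ => 1 - π + π * z) (Set.Icc 0 1) (Set.Icc 0 1) := by
    intro z hz
    obtain ⟨hz0, hz1⟩ := hz
    constructor
    · show (0:ℝ) ≤ 1 - π + π * z
      nlinarith
    · show 1 - π + π * z ≤ 1
      nlinarith
  have h11 : (1:ℝ) - π + π * 1 = 1 := by ring
  have hA' : HasDerivWithinAt (fun z => aFun p t z) (∑' s, Fder p t s 1) (Set.Icc (0:ℝ) 1)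
      ((fun z : ℝ => 1 - π + π * z) 1) := by
    simpa [h11] using hA
  have hcomp : HasDerivWithinAt (fun z => aFun p t (1 - π + π * z))
      ((∑' s, Fder p t s 1) * π) (Set.Icc (0:ℝ) 1) 1 := by
    exact hA'.comp 1 hw hmaps
  have hwfull : HasDerivAt (fun z : ℝ => 1 - π + π * z) π 1 := by
    simpa using ((hasDerivAt_id (1:ℝ)).const_mul π).const_add (1 - π)
  have hprod : HasDerivAt (fun z : ℝ => (∑' s : ℕ, (s:ℝ) * p s) * z * (1 - π + π * z))
      ((∑' s : ℕ, (s:ℝ)*p s) * (1 + π)) 1 := by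
    have h := ((hasDerivAt_id (1:ℝ)).mul hwfull).const_mul (∑' s : ℕ, (s:ℝ)*p s)
    refine (h.congr_of_eventuallyEq (Filter.Eventually.of_forall fun z => ?_)).congr_deriv ?_
    · simp only [Pi.mul_apply, id_eq]; ring
    · simp only [id_eq]; ring
  have hg : HasDerivWithinAt
      (fun z : ℝ => (∑' s : ℕ, (s:ℝ)*p s) * z * (1-π+π*z) - aFun p t (1-π+π*z))
      ((∑' s : ℕ, (s:ℝ)*p s) * (1+π) - (∑' s, Fder p t s 1) * π) (Set.Icc 0 1) 1 :=
    hprod.hasDerivWithinAt.sub hcomp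
  have hval : (∑' s : ℕ, (s:ℝ)*p s) * (1+π) - (∑' s, Fder p t s 1) * π
      = (∑' s : ℕ, (s:ℝ)*p s) - π * ∑' s : ℕ, (s:ℝ)*((s:ℝ)-1)*p s*t s 0 := by
    rw [hAval]; ring
  rw [← hval]
  exact hg
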